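/- Let S = {(a,b) ∈ F_p^2 : b < a} (coordinates identified with {0,...,p-1}). For every slope m ∈ F_p with m ∉ {0,1}, every line y = mx + c (c ∈ F_p, arithmetic mod p) intersects S in exactly (p-1)/2 points. -/

import Mathlib

/-- Number of points of `S` on the line through `x` with direction vector `u`. -/
def lineCount (p : ℕ) [Fact p.Prime] (S : Finset (ZMod p × ZMod p))
    (u x : ZMod p × ZMod p) : ℕ :=
  (S.filter fun w => ∃ t : ZMod p, w = x + t • u).card

/-- Direction vectors of the `p+1` directions: `some m` has slope `m`, `none` is vertical. -/
def dirVec (p : ℕ) : Option (ZMod p) → ZMod p × ZMod p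
  | none => (0, 1)
  | some m => (1, m)

/-- `S` is equidistributed in the direction of the vector `u`. -/
def Equidistributed (p : ℕ) [Fact p.Prime] (S : Finset (ZMod p × ZMod p))
    (u : ZMod p × ZMod p) : Prop :=
  ∀ x y : ZMod p × ZMod p, lineCount p S u x = lineCount p S u y

open Classical in
/-- The set of special (non-equidistributed) directions of `S`. -/
noncomputable def specialDirs (p : ℕ) [Fact p.Prime] (S : Finset (ZMod p × ZMod p)) :
    Finset (Option (ZMod p)) :=
  Finset.univ.filter fun d => ¬ Equidistributed p S (dirVec p d)

/-- The triangle set `{(a,b) : b < a}` with coordinates identified with `{0,…,p-1}`. -/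
def triangle (p : ℕ) [Fact p.Prime] : Finset (ZMod p × ZMod p) :=
  Finset.univ.filter fun w => w.2.val < w.1.val

lemma val_key (p : ℕ) [Fact p.Prime] (a b w : ZMod p) (h : b = a + w) :
    b.val + (if b.val < a.val then p else 0) = a.val + w.val := by
  have hp : 0 < p := (Fact.out : p.Prime).pos
  subst h
  rw [ZMod.val_add]
  set s := a.val + w.val with hs
  rcases lt_or_ge s p with h1 | h1
  · rw [Nat.mod_eq_of_lt h1, if_neg (by omega)]; omega
  · have hw : w.val < p := w.val_lt
    have ha : a.val < p := a.val_lt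
    have : s % p = s - p := by
      rw [Nat.mod_eq_sub_mod h1, Nat.mod_eq_of_lt (by omega)]
    rw [this, if_pos (by omega)]
    omega

lemma sum_val_eq (p : ℕ) [Fact p.Prime] : ∑ a : ZMod p, a.val = ∑ i ∈ Finset.range p, i := by
  refine Finset.sum_nbij' (fun a => a.val) (fun i => (i : ZMod p)) ?_ ?_ ?_ ?_ ?_
  · intro a _; exact Finset.mem_range.mpr a.val_lt
  · intro i _; exact Finset.mem_univ _
  · intro a _; exact ZMod.natCast_zmod_val a
  · intro i hi; exact ZMod.val_cast_of_lt (Finset.mem_range.mp hi)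
  · intro a _; rfl

/-- reindexing: sum of val over an affine bijection -/
lemma sum_val_affine (p : ℕ) [Fact p.Prime] (m c : ZMod p) (hm : m ≠ 0) :
    ∑ a : ZMod p, (m * a + c).val = ∑ a : ZMod p, a.val := by
  apply Fintype.sum_equiv ((Equiv.mulLeft₀ m hm).trans (Equiv.addRight c))
  intro a; rfl

theorem stmt_5 (p : ℕ) [Fact p.Prime] (hodd : Odd p) (m : ZMod p)
    (hm0 : m ≠ 0) (hm1 : m ≠ 1) (c : ZMod p) :
    ((triangle p).filter fun w => w.2 = m * w.1 + c).card = (p - 1) / 2 := by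
  have htri : triangle p = Finset.univ.filter fun w => w.2.val < w.1.val := rfl
  have hp : 0 < p := (Fact.out : p.Prime).pos
  -- reduce to counting a's
  set T : Finset (ZMod p) := Finset.univ.filter (fun a => (m * a + c).val < a.val) with hT
  have hcard : ((triangle p).filter fun w => w.2 = m * w.1 + c).card = T.card := by
    apply Finset.card_nbij' (fun w => w.1) (fun a => (a, m * a + c))
    · intro w hw
      simp only [htri, Finset.mem_coe, Finset.mem_filter, Finset.mem_univ, true_and] at hw ⊢
      rw [hT]; simp only [Finset.mem_coe, Finset.mem_filter, Finset.mem_univ, true_and]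
      rw [← hw.2]; exact hw.1
    · intro a ha
      rw [hT] at ha
      simp only [Finset.mem_coe, Finset.mem_filter, Finset.mem_univ, true_and] at ha
      simp only [htri, Finset.mem_coe, Finset.mem_filter, Finset.mem_univ, true_and]
      exact ⟨ha, trivial⟩
    · intro w hw
      simp only [htri, Finset.mem_coe, Finset.mem_filter, Finset.mem_univ, true_and] at hw
      exact Prod.ext rfl hw.2.symm
    · intro a _; rfl
  rw [hcard]
  -- sum the key identity
  have hsum : ∑ a : ZMod p, ((m * a + c).val + (if (m * a + c).val < a.val then p else 0))
      = ∑ a : ZMod p, (a.val + ((m - 1) * a + c).val) := by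
    apply Finset.sum_congr rfl
    intro a _
    exact val_key p a (m * a + c) ((m - 1) * a + c) (by ring)
  rw [Finset.sum_add_distrib, Finset.sum_add_distrib] at hsum
  have h1 : ∑ a : ZMod p, (m * a + c).val = ∑ a : ZMod p, a.val := sum_val_affine p m c hm0
  have h2 : ∑ a : ZMod p, ((m - 1) * a + c).val = ∑ a : ZMod p, a.val :=
    sum_val_affine p (m - 1) c (sub_ne_zero.mpr hm1)
  have h3 : ∑ a : ZMod p, (if (m * a + c).val < a.val then p else 0) = T.card * p := by
    rw [Finset.sum_ite, Finset.sum_const, Finset.sum_const_zero, add_zero, smul_eq_mul, mul_comm]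
  rw [h1, h2, h3] at hsum
  -- hsum : ∑ a.val + T.card * p = ∑ a.val + ∑ a.val
  have hTp : T.card * p = ∑ a : ZMod p, a.val := by omega
  have hv : (∑ a : ZMod p, a.val) * 2 = p * (p - 1) := by
    rw [sum_val_eq, Finset.sum_range_id_mul_two]
  obtain ⟨k, hk⟩ := hodd
  have hcardT : T.card * p * 2 = ((p - 1) / 2) * p * 2 := by
    rw [hTp]
    have : (p - 1) / 2 = k := by omega
    rw [this]
    calc (∑ a : ZMod p, a.val) * 2 = p * (p - 1) := hv
    _ = k * p * 2 := by
        have h4 : p - 1 = 2 * k := by omega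
        rw [h4]; ring
  have := Nat.eq_of_mul_eq_mul_right hp (Nat.eq_of_mul_eq_mul_right (by norm_num) hcardT)
  omega
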